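/- arXiv:1308.3074 — 2 statements merged into one kernel-verified Lean document; each statement's English description precedes it below -/
import Mathlib

section
/- For every n ≥ 4, the graph Q_n is {1,n}-minimal: Q_n is indecomposable and for every proper subset X ⊆ {1,…,n} with {1,n} ⊆ X and |X| ≥ 3, the induced subgraph Q_n[X] is decomposable. -/
open SimpleGraph

variable {V : Type*}

/-- `I` is an interval (module) of `G`: every vertex outside `I` is adjacent
either to all or to none of the vertices of `I`. -/
def IsInterval (G : SimpleGraph V) (I : Set V) : Prop :=
  ∀ x ∉ I, ∀ a ∈ I, ∀ b ∈ I, (G.Adj a x ↔ G.Adj b x)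

/-- A graph is indecomposable if its only intervals are trivial. -/
def Indecomposable (G : SimpleGraph V) : Prop :=
  ∀ I : Set V, IsInterval G I → I = ∅ ∨ I = Set.univ ∨ ∃ x, I = {x}

def Decomposable (G : SimpleGraph V) : Prop := ¬ Indecomposable G

/-- The path graph on `Fin n`; the vertex `(i : Fin n)` represents the
paper's vertex `i+1`, so edges join consecutive indices. -/
def P (n : ℕ) : SimpleGraph (Fin n) :=
  SimpleGraph.fromRel (fun i j => (i : ℕ) + 1 = (j : ℕ))

/-- The graph `Q_n` on `Fin n` (index `i` represents the paper's vertex `i+1`):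
the path on indices `0..n-3` together with the hub index `n-2` (vertex `n-1`)
joined to every index except `n-2` and `n-3`. -/
def Q (n : ℕ) : SimpleGraph (Fin n) :=
  SimpleGraph.fromRel (fun i j =>
    ((i : ℕ) + 1 = (j : ℕ) ∧ (j : ℕ) ≤ n - 3) ∨
    ((i : ℕ) = n - 2 ∧ (j : ℕ) ≠ n - 2 ∧ (j : ℕ) ≠ n - 3))

/-- `Ext(X)`. -/
def ExtSet (G : SimpleGraph V) (X : Set V) : Set V :=
  {v | v ∉ X ∧ Indecomposable (G.induce (X ∪ {v}))}

/-- `⟨X⟩`. -/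
def AngleSet (G : SimpleGraph V) (X : Set V) : Set V :=
  {v | v ∉ X ∧ ((∀ x ∈ X, G.Adj v x) ∨ (∀ x ∈ X, ¬ G.Adj v x))}

/-- `X(u)`: vertices `v ∉ X` such that `{u,v}` is an interval of `G[X ∪ {v}]`. -/
def XSet (G : SimpleGraph V) (X : Set V) (u : V) : Set V :=
  {v | v ∉ X ∧ IsInterval (G.induce (X ∪ {v})) (Subtype.val ⁻¹' {u, v})}

/-- `G` is `{a,b}`-minimal. -/
def IsMinimal (G : SimpleGraph V) (a b : V) : Prop :=
  Indecomposable G ∧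
    ∀ X : Set V, X ⊂ Set.univ → a ∈ X → b ∈ X → 3 ≤ X.ncard →
      Decomposable (G.induce X)

lemma adjQ {n : ℕ} (hn : 4 ≤ n) (i j : Fin n) : (Q n).Adj i j ↔
    ((i:ℕ) ≠ (j:ℕ) ∧ (((i:ℕ)+1 = (j:ℕ) ∧ (j:ℕ) ≤ n-3) ∨ ((j:ℕ)+1 = (i:ℕ) ∧ (i:ℕ) ≤ n-3) ∨
      ((i:ℕ) = n-2 ∧ (j:ℕ) ≠ n-3) ∨ ((j:ℕ) = n-2 ∧ (i:ℕ) ≠ n-3))) := by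
  simp only [Q, fromRel_adj, ne_eq, ← Fin.val_inj]
  omega

lemma Q_indec (n : ℕ) (hn : 4 ≤ n) : Indecomposable (Q n) := by
  intro I hI
  by_contra hcon
  push_neg at hcon
  obtain ⟨hne, huniv, hsing⟩ := hcon
  obtain ⟨a, ha⟩ := hne
  obtain ⟨b, hb, hab⟩ : ∃ b ∈ I, b ≠ a := by
    by_contra h; push_neg at h
    exact hsing a (Set.eq_singleton_iff_unique_mem.mpr ⟨ha, h⟩)
  have step : ∀ (u v x : Fin n), u ∈ I → v ∈ I → (Q n).Adj u x → ¬ (Q n).Adj v x → x ∈ I := by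
    intro u v x hu hv hux hvx
    by_contra hx
    exact hvx ((hI x hx u hu v hv).mp hux)
  have l_univ : (⟨n-2, by omega⟩ : Fin n) ∈ I → (⟨n-1, by omega⟩ : Fin n) ∈ I → I = Set.univ := by
    intro hh hv
    have hpath : ∀ k, (hk : k ≤ n-4) → (⟨k, by omega⟩ : Fin n) ∈ I := by
      intro k hk
      refine step ⟨n-2, by omega⟩ ⟨n-1, by omega⟩ _ hh hv ?_ ?_
      · rw [adjQ hn]; simp; omega
      · rw [adjQ hn]; simp; omega
    have h3 : (⟨n-3, by omega⟩ : Fin n) ∈ I := by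
      refine step ⟨n-4, by omega⟩ ⟨n-2, by omega⟩ _ (hpath (n-4) le_rfl) hh ?_ ?_
      · rw [adjQ hn]; simp; omega
      · rw [adjQ hn]; simp; omega
    ext v
    simp only [Set.mem_univ, iff_true]
    have hv' := v.isLt
    by_cases h1 : (v:ℕ) ≤ n-4
    · have := hpath v h1; rwa [Fin.eta] at this
    · by_cases h2 : (v:ℕ) = n-3
      · have : v = ⟨n-3, by omega⟩ := Fin.ext (by simpa)
        rwa [this]
      · by_cases h4 : (v:ℕ) = n-2
        · have : v = ⟨n-2, by omega⟩ := Fin.ext (by simpa)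
          rwa [this]
        · have : v = ⟨n-1, by omega⟩ := Fin.ext (by simp; omega)
          rwa [this]
  have l_hub_path : ∀ p : Fin n, (⟨n-2, by omega⟩ : Fin n) ∈ I → p ∈ I → (p:ℕ) ≤ n-3 → I = Set.univ := by
    intro p hh hp hple
    refine l_univ hh (step ⟨n-2, by omega⟩ p ⟨n-1, by omega⟩ hh hp ?_ ?_)
    · rw [adjQ hn]; simp; omega
    · rw [adjQ hn]; simp; omega
  have l_consec : ∀ d i, (h1 : i+1 ≤ n-3) → n-3-(i+1) = d → (⟨i, by omega⟩ : Fin n) ∈ I →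
      (⟨i+1, by omega⟩ : Fin n) ∈ I → (⟨n-2, by omega⟩ : Fin n) ∈ I := by
    intro d
    induction d with
    | zero =>
      intro i h1 hd hi hi1
      refine step ⟨i, by omega⟩ ⟨i+1, by omega⟩ ⟨n-2, by omega⟩ hi hi1 ?_ ?_
      · rw [adjQ hn]; simp; omega
      · rw [adjQ hn]; simp; omega
    | succ d ih =>
      intro i h1 hd hi hi1
      have hx : (⟨i+1+1, by omega⟩ : Fin n) ∈ I := by
        refine step ⟨i+1, by omega⟩ ⟨i, by omega⟩ ⟨i+1+1, by omega⟩ hi1 hi ?_ ?_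
        · rw [adjQ hn]; simp; omega
        · rw [adjQ hn]; simp; omega
      exact ih (i+1) (by omega) (by omega) hi1 hx
  have main : ∀ u v : Fin n, u ∈ I → v ∈ I → (u:ℕ) < (v:ℕ) → I = Set.univ := by
    intro u v hu hv huv
    have hv' := v.isLt
    have hmku : (⟨(u:ℕ), by omega⟩ : Fin n) ∈ I := by rwa [Fin.eta]
    have hmkv : (⟨(v:ℕ), by omega⟩ : Fin n) ∈ I := by rwa [Fin.eta]
    by_cases hb2 : (v:ℕ) = n-2
    · have hveq : v = ⟨n-2, by omega⟩ := Fin.ext (by simpa)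
      exact l_hub_path u (hveq ▸ hv) hu (by omega)
    by_cases hb1 : (v:ℕ) = n-1
    · by_cases hu2 : (u:ℕ) = n-2
      · have hueq : u = ⟨n-2, by omega⟩ := Fin.ext (by simpa)
        have hveq : v = ⟨n-1, by omega⟩ := Fin.ext (by simpa)
        exact l_univ (hueq ▸ hu) (hveq ▸ hv)
      · have hu3 : (u:ℕ) ≤ n-3 := by omega
        by_cases hu4 : (u:ℕ) ≤ n-4
        · have hx : (⟨(u:ℕ)+1, by omega⟩ : Fin n) ∈ I := by
            refine step u v _ hu hv ?_ ?_
            · rw [adjQ hn]; simp; omega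
            · rw [adjQ hn]; simp; omega
          have hhub := l_consec (n-3-((u:ℕ)+1)) (u:ℕ) (by omega) rfl hmku hx
          exact l_hub_path u hhub hu hu3
        · -- u = n-3
          have hx : (⟨n-4, by omega⟩ : Fin n) ∈ I := by
            refine step u v _ hu hv ?_ ?_
            · rw [adjQ hn]; simp; omega
            · rw [adjQ hn]; simp; omega
          have heq : (⟨n-4+1, by omega⟩ : Fin n) = u := Fin.ext (by simp; omega)
          have hhub := l_consec 0 (n-4) (by omega) (by omega) hx (heq ▸ hu)
          exact l_hub_path u hhub hu hu3
    · have hv3 : (v:ℕ) ≤ n-3 := by omega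
      by_cases hc : (v:ℕ) = (u:ℕ)+1
      · have heq : (⟨(u:ℕ)+1, by omega⟩ : Fin n) = v := Fin.ext (by simp; omega)
        have hhub := l_consec (n-3-((u:ℕ)+1)) (u:ℕ) (by omega) rfl hmku (heq ▸ hv)
        exact l_hub_path u hhub hu (by omega)
      by_cases hc2 : (v:ℕ) = (u:ℕ)+2
      · by_cases hc3 : (v:ℕ) = n-3
        · have hh : (⟨n-2, by omega⟩ : Fin n) ∈ I := by
            refine step u v _ hu hv ?_ ?_
            · rw [adjQ hn]; simp; omega
            · rw [adjQ hn]; simp; omega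
          exact l_hub_path u hh hu (by omega)
        · have hx : (⟨(v:ℕ)+1, by omega⟩ : Fin n) ∈ I := by
            refine step v u _ hv hu ?_ ?_
            · rw [adjQ hn]; simp; omega
            · rw [adjQ hn]; simp; omega
          have hhub := l_consec (n-3-((v:ℕ)+1)) (v:ℕ) (by omega) rfl hmkv hx
          exact l_hub_path v hhub hv hv3
      · -- v ≥ u+3
        have hx : (⟨(v:ℕ)-1, by omega⟩ : Fin n) ∈ I := by
          refine step v u _ hv hu ?_ ?_
          · rw [adjQ hn]; simp; omega
          · rw [adjQ hn]; simp; omega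
        have heq : (⟨(v:ℕ)-1+1, by omega⟩ : Fin n) = v := Fin.ext (by simp; omega)
        have hhub := l_consec (n-3-((v:ℕ)-1+1)) ((v:ℕ)-1) (by omega) rfl hx (heq ▸ hv)
        exact l_hub_path v hhub hv hv3
  rcases lt_trichotomy (a:ℕ) (b:ℕ) with h | h | h
  · exact huniv (main a b ha hb h)
  · exact hab (Fin.ext h.symm)
  · exact huniv (main b a hb ha h)

lemma not_indec {W : Type*} (G : SimpleGraph W) (I : Set W) (hI : IsInterval G I)
    (u v w : W) (hu : u ∈ I) (hv : v ∈ I) (huv : u ≠ v) (hw : w ∉ I) :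
    Decomposable G := by
  intro h
  rcases h I hI with h1 | h1 | ⟨x, h1⟩
  · rw [h1] at hu; exact hu
  · rw [h1] at hw; exact hw (Set.mem_univ w)
  · rw [h1, Set.mem_singleton_iff] at hu hv
    exact huv (hu.trans hv.symm)

lemma Q_part2 (n : ℕ) (hn : 4 ≤ n) (X : Set (Fin n)) (hXss : X ⊂ Set.univ)
    (h0 : (⟨0, Nat.lt_of_lt_of_le (by norm_num) hn⟩ : Fin n) ∈ X)
    (hl : (⟨n-1, Nat.sub_lt (Nat.lt_of_lt_of_le (by norm_num) hn) Nat.one_pos⟩ : Fin n) ∈ X)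
    (hcard : 3 ≤ X.ncard) : Decomposable ((Q n).induce X) := by
  classical
  have iadj : ∀ u v : ↑X, ((Q n).induce X).Adj u v ↔ (Q n).Adj ↑u ↑v := by
    intro u v; simp
  obtain ⟨w, -, hw⟩ := Set.exists_of_ssubset hXss
  have memval : ∀ k, (hk : k < n) → ∀ v : ↑X, ((v : Fin n) : ℕ) = k → (⟨k, hk⟩ : Fin n) ∈ X := by
    intro k hk v hv
    have : (v : Fin n) = ⟨k, hk⟩ := Fin.ext (by simpa)
    rw [← this]; exact v.2
  by_cases hhub : (⟨n-2, by omega⟩ : Fin n) ∈ X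
  · by_cases h3X : (⟨n-3, by omega⟩ : Fin n) ∈ X
    · -- least missing vertex m
      have hex : ∃ k, ∃ hk : k < n, (⟨k, hk⟩ : Fin n) ∉ X := ⟨(w:ℕ), w.isLt, by rwa [Fin.eta]⟩
      obtain ⟨hmlt, hmX⟩ := Nat.find_spec hex
      set m := Nat.find hex with hm
      have key : ∀ k, (hk : k < n) → (⟨k, hk⟩ : Fin n) ∈ X → m ≠ k := by
        intro k hk hkX h
        apply hmX
        have : (⟨Nat.find hex, hmlt⟩ : Fin n) = ⟨k, hk⟩ := Fin.ext h
        rw [this]; exact hkX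
      have hm0 : m ≠ 0 := key 0 (by omega) h0
      have hmn1 : m ≠ n-1 := key (n-1) (by omega) hl
      have hmn2 : m ≠ n-2 := key (n-2) (by omega) hhub
      have hmn3 : m ≠ n-3 := key (n-3) (by omega) h3X
      have hm4 : m ≤ n-4 := by omega
      set I : Set ↑X := {v | ((v : Fin n) : ℕ) < m ∨ ((v : Fin n) : ℕ) = n-1} with hI
      have hIint : IsInterval ((Q n).induce X) I := by
        intro x hx a ha b hb
        simp only [hI, Set.mem_setOf_eq, not_or, not_lt] at hx ha hb
        have hxm : ((x : Fin n) : ℕ) ≠ m := by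
          intro h; exact hmX (memval m hmlt x h)
        have hxlt := (x : Fin n).isLt
        rw [iadj, iadj, adjQ hn, adjQ hn]
        omega
      refine not_indec _ I hIint ⟨⟨0, by omega⟩, h0⟩ ⟨⟨n-1, by omega⟩, hl⟩ ⟨⟨n-2, by omega⟩, hhub⟩ ?_ ?_ ?_ ?_
      · simp [hI]; omega
      · simp [hI]
      · intro h
        have := congrArg (fun z : ↑X => ((z : Fin n) : ℕ)) h
        simp at this; omega
      · simp [hI]; omega
    · -- n-3 missing: I = X \ {hub}
      set I : Set ↑X := {v | ((v : Fin n) : ℕ) ≠ n-2} with hI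
      have hIint : IsInterval ((Q n).induce X) I := by
        intro x hx a ha b hb
        simp only [hI, Set.mem_setOf_eq, not_not] at hx ha hb
        have ha3 : ((a : Fin n) : ℕ) ≠ n-3 := by
          intro h; exact h3X (memval (n-3) (by omega) a h)
        have hb3 : ((b : Fin n) : ℕ) ≠ n-3 := by
          intro h; exact h3X (memval (n-3) (by omega) b h)
        rw [iadj, iadj, adjQ hn, adjQ hn]
        omega
      refine not_indec _ I hIint ⟨⟨0, by omega⟩, h0⟩ ⟨⟨n-1, by omega⟩, hl⟩ ⟨⟨n-2, by omega⟩, hhub⟩ ?_ ?_ ?_ ?_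
      · simp [hI]; omega
      · simp [hI]; omega
      · intro h
        have := congrArg (fun z : ↑X => ((z : Fin n) : ℕ)) h
        simp at this; omega
      · simp [hI]
  · -- hub missing: I = X \ {n-1}
    obtain ⟨t, htX, ht0, htl⟩ : ∃ t ∈ X, t ≠ (⟨0, by omega⟩ : Fin n) ∧ t ≠ (⟨n-1, by omega⟩ : Fin n) := by
      by_contra hc
      push_neg at hc
      have hsub : X ⊆ {(⟨0, by omega⟩ : Fin n), (⟨n-1, by omega⟩ : Fin n)} := by
        intro t ht
        rcases Classical.em (t = (⟨0, by omega⟩ : Fin n)) with h | h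
        · exact Or.inl h
        · exact Or.inr (hc t ht h)
      have := Set.ncard_le_ncard hsub (Set.toFinite _)
      have h2 : ({(⟨0, by omega⟩ : Fin n), (⟨n-1, by omega⟩ : Fin n)} : Set (Fin n)).ncard ≤ 2 := by
        apply le_trans (Set.ncard_insert_le _ _)
        simp
      omega
    set I : Set ↑X := {v | ((v : Fin n) : ℕ) ≠ n-1} with hI
    have hIint : IsInterval ((Q n).induce X) I := by
      intro x hx a ha b hb
      simp only [hI, Set.mem_setOf_eq, not_not] at hx ha hb
      have ha2 : ((a : Fin n) : ℕ) ≠ n-2 := by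
        intro h; exact hhub (memval (n-2) (by omega) a h)
      have hb2 : ((b : Fin n) : ℕ) ≠ n-2 := by
        intro h; exact hhub (memval (n-2) (by omega) b h)
      rw [iadj, iadj, adjQ hn, adjQ hn]
      omega
    have htval : (t : ℕ) ≠ n-1 := by
      intro h; exact htl (Fin.ext (by simpa))
    have htval0 : (t : ℕ) ≠ 0 := by
      intro h; exact ht0 (Fin.ext (by simpa))
    refine not_indec _ I hIint ⟨⟨0, by omega⟩, h0⟩ ⟨t, htX⟩ ⟨⟨n-1, by omega⟩, hl⟩ ?_ ?_ ?_ ?_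
    · simp [hI]; omega
    · simp [hI]; omega
    · intro h
      have := congrArg (fun z : ↑X => ((z : Fin n) : ℕ)) h
      simp at this; omega
    · simp [hI]

theorem Q_minimal (n : ℕ) (hn : 4 ≤ n) :
    IsMinimal (Q n) (⟨0, by omega⟩ : Fin n) (⟨n - 1, by omega⟩ : Fin n) := by
  constructor
  · exact Q_indec n hn
  · intro X hss ha hb hc
    exact Q_part2 n hn X hss ha hb hc
end

section
/- For every n ≥ 6, the indecomposability graph of the path P_n has edge set exactly { {1,2}, {1,n}, {n−1,n} }; that is, for distinct vertices x, y of P_n, the induced subgraph P_n − {x,y} is indecomposable if and only if {x,y} is one of {1,2}, {1,n}, {n−1,n}. -/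
open SimpleGraph

variable {V : Type*}

lemma nat_boundary (Pr : ℕ → Prop) {p q : ℕ} (h : p ≤ q) (hp : Pr p) (hq : ¬ Pr q) :
    ∃ k, p ≤ k ∧ k < q ∧ Pr k ∧ ¬ Pr (k+1) := by
  by_contra hc
  push_neg at hc
  have key : ∀ d, p + d ≤ q → Pr (p + d) := by
    intro d
    induction d with
    | zero => intro _; exact hp
    | succ d ih =>
      intro hd
      have h1 := ih (by omega)
      exact hc (p + d) (by omega) (by omega) h1
  have := key (q - p) (by omega)
  rw [Nat.add_sub_cancel' h] at this
  exact hq this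

lemma P_adj {n : ℕ} {i j : Fin n} :
    (P n).Adj i j ↔ ((i:ℕ) + 1 = (j:ℕ) ∨ (j:ℕ) + 1 = (i:ℕ)) := by
  unfold P
  rw [SimpleGraph.fromRel_adj]
  constructor
  · rintro ⟨_, h⟩; exact h
  · intro h
    refine ⟨?_, h⟩
    rintro rfl
    omega

lemma induce_P_adj {n : ℕ} {S : Set (Fin n)} (v v' : ↥S) :
    ((P n).induce S).Adj v v' ↔
      (((v:Fin n):ℕ) + 1 = ((v':Fin n):ℕ) ∨ ((v':Fin n):ℕ) + 1 = ((v:Fin n):ℕ)) := by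
  show (P n).Adj _ _ ↔ _
  exact P_adj

lemma run_indec (n l m : ℕ) (hm : 4 ≤ m) (hlm : l + m ≤ n) (S : Set (Fin n))
    (hS : ∀ v : Fin n, v ∈ S ↔ l ≤ v.val ∧ v.val < l + m) :
    Indecomposable ((P n).induce S) := by
  intro I hI
  by_cases hne : I = ∅
  · left; exact hne
  obtain ⟨p, hp⟩ := Set.nonempty_iff_ne_empty.2 hne
  by_cases hsing : ∀ c ∈ I, c = p
  · right; right; exact ⟨p, Set.eq_singleton_iff_unique_mem.2 ⟨hp, hsing⟩⟩
  push_neg at hsing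
  obtain ⟨q, hq, hqp⟩ := hsing
  right; left
  rw [Set.eq_univ_iff_forall]
  by_contra hx
  push_neg at hx
  obtain ⟨x, hxI⟩ := hx
  have hrange : ∀ v : ↥S, l ≤ ((v:Fin n):ℕ) ∧ ((v:Fin n):ℕ) < l + m := fun v => (hS v).1 v.2
  have huniq : ∀ (v w : ↥S), ((v:Fin n):ℕ) = ((w:Fin n):ℕ) → v = w := by
    intro v w h
    exact Subtype.ext (Fin.ext h)
  set Qr : ℕ → Prop := fun k => ∀ v : ↥S, ((v:Fin n):ℕ) = k → v ∈ I with hQr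
  have hQmem : ∀ v : ↥S, Qr ((v:Fin n):ℕ) ↔ v ∈ I := by
    intro v
    constructor
    · intro h; exact h v rfl
    · intro h w hw; rw [huniq w v hw]; exact h
  obtain ⟨u, w, huI, hwI, hadj⟩ :
      ∃ u w : ↥S, u ∈ I ∧ w ∉ I ∧
        (((u:Fin n):ℕ) + 1 = ((w:Fin n):ℕ) ∨ ((w:Fin n):ℕ) + 1 = ((u:Fin n):ℕ)) := by
    rcases le_or_gt ((p:Fin n):ℕ) ((x:Fin n):ℕ) with hle | hlt
    · obtain ⟨k, hk1, hk2, hk3, hk4⟩ :=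
        nat_boundary Qr hle ((hQmem p).2 hp) (fun h => hxI ((hQmem x).1 h))
      have hku : l ≤ k ∧ k + 1 < l + m :=
        ⟨le_trans (hrange p).1 hk1, by have := (hrange x).2; omega⟩
      have hkn : k < n := by omega
      have hkn1 : k + 1 < n := by omega
      have hmu : (⟨k, hkn⟩ : Fin n) ∈ S :=
        (hS _).2 ⟨by show l ≤ k; omega, by show k < l + m; omega⟩
      have hmw : (⟨k+1, hkn1⟩ : Fin n) ∈ S :=
        (hS _).2 ⟨by show l ≤ k+1; omega, by show k+1 < l + m; omega⟩
      refine ⟨⟨⟨k, hkn⟩, hmu⟩, ⟨⟨k+1, hkn1⟩, hmw⟩,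
              hk3 _ rfl, fun h => hk4 (fun v hv => ?_), Or.inl rfl⟩
      rw [huniq v ⟨⟨k+1, hkn1⟩, hmw⟩ hv]; exact h
    · obtain ⟨k, hk1, hk2, hk3, hk4⟩ :=
        nat_boundary (fun k => ¬ Qr k) hlt.le
          (fun h => hxI ((hQmem x).1 h))
          (not_not.2 ((hQmem p).2 hp))
      rw [not_not] at hk4
      have hku : l ≤ k ∧ k + 1 < l + m :=
        ⟨le_trans (hrange x).1 hk1, by have := (hrange p).2; omega⟩
      have hkn : k < n := by omega
      have hkn1 : k + 1 < n := by omega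
      have hmw : (⟨k, hkn⟩ : Fin n) ∈ S :=
        (hS _).2 ⟨by show l ≤ k; omega, by show k < l + m; omega⟩
      have hmu : (⟨k+1, hkn1⟩ : Fin n) ∈ S :=
        (hS _).2 ⟨by show l ≤ k+1; omega, by show k+1 < l + m; omega⟩
      refine ⟨⟨⟨k+1, hkn1⟩, hmu⟩, ⟨⟨k, hkn⟩, hmw⟩,
              hk4 _ rfl, fun h => hk3 (fun v hv => ?_), Or.inr rfl⟩
      rw [huniq v ⟨⟨k, hkn⟩, hmw⟩ hv]; exact h
  have hallI : ∀ c ∈ I,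
      (((c:Fin n):ℕ) + 1 = ((w:Fin n):ℕ) ∨ ((w:Fin n):ℕ) + 1 = ((c:Fin n):ℕ)) := by
    intro c hc
    have h2 := hI w hwI u huI c hc
    rw [induce_P_adj, induce_P_adj] at h2
    exact h2.1 hadj
  have hpw := hallI p hp
  have hqw := hallI q hq
  have hpq : ((p:Fin n):ℕ) ≠ ((q:Fin n):ℕ) := fun h => hqp (huniq q p h.symm)
  have hwr := hrange w
  have hpr := hrange p
  have hqr := hrange q
  rcases le_or_gt (l+2) ((w:Fin n):ℕ) with h2 | h2
  · have hy1 : ((w:Fin n):ℕ) - 2 < n := by omega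
    have hy2 : (⟨((w:Fin n):ℕ) - 2, hy1⟩ : Fin n) ∈ S :=
      (hS _).2 ⟨by show l ≤ ((w:Fin n):ℕ) - 2; omega,
                by show ((w:Fin n):ℕ) - 2 < l + m; omega⟩
    set y : ↥S := ⟨⟨((w:Fin n):ℕ) - 2, hy1⟩, hy2⟩ with hy
    have hyval : ((y:Fin n):ℕ) = ((w:Fin n):ℕ) - 2 := rfl
    have hyI : y ∉ I := by
      intro h
      have h3 := hallI y h
      rw [hyval] at h3
      omega
    have hiff := hI y hyI p hp q hq
    rw [induce_P_adj, induce_P_adj, hyval] at hiff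
    omega
  · have hy1 : ((w:Fin n):ℕ) + 2 < n := by omega
    have hy2 : (⟨((w:Fin n):ℕ) + 2, hy1⟩ : Fin n) ∈ S :=
      (hS _).2 ⟨by show l ≤ ((w:Fin n):ℕ) + 2; omega,
                by show ((w:Fin n):ℕ) + 2 < l + m; omega⟩
    set y : ↥S := ⟨⟨((w:Fin n):ℕ) + 2, hy1⟩, hy2⟩ with hy
    have hyval : ((y:Fin n):ℕ) = ((w:Fin n):ℕ) + 2 := rfl
    have hyI : y ∉ I := by
      intro h
      have h3 := hallI y h
      rw [hyval] at h3
      omega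
    have hiff := hI y hyI p hp q hq
    rw [induce_P_adj, induce_P_adj, hyval] at hiff
    omega

lemma run_decomp (n : ℕ) (S : Set (Fin n)) (l len : ℕ) (h2 : 2 ≤ len) (hr : l + len ≤ n)
    (hin : ∀ k (h : k < n), l ≤ k → k < l + len → (⟨k, h⟩ : Fin n) ∈ S)
    (hleft : ∀ v : Fin n, v ∈ S → v.val + 1 ≠ l)
    (hright : ∀ v : Fin n, v ∈ S → v.val ≠ l + len)
    (hw : ∃ v : Fin n, v ∈ S ∧ (v.val < l ∨ l + len ≤ v.val)) :
    ¬ Indecomposable ((P n).induce S) := by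
  intro hind
  set I : Set ↥S := {v | l ≤ ((v:Fin n):ℕ) ∧ ((v:Fin n):ℕ) < l + len} with hIdef
  have hmemI : ∀ v : ↥S, v ∈ I ↔ (l ≤ ((v:Fin n):ℕ) ∧ ((v:Fin n):ℕ) < l + len) := by
    intro v; rfl
  have key : ∀ c : ↥S, c ∈ I → ∀ v : ↥S, v ∉ I → ¬ ((P n).induce S).Adj c v := by
    intro c hc v hv hadj
    rw [induce_P_adj] at hadj
    rw [hmemI] at hc hv
    have h1 := hleft _ v.2
    have h2 := hright _ v.2
    have h3 : ((v:Fin n):ℕ) < n := (v:Fin n).isLt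
    omega
  have hint : IsInterval ((P n).induce S) I := by
    intro v hv a ha b hb
    exact iff_of_false (key a ha v hv) (key b hb v hv)
  have hl1 : l < n := by omega
  have hl2 : l + 1 < n := by omega
  have hu0 : (⟨l, hl1⟩ : Fin n) ∈ S := hin l hl1 le_rfl (by omega)
  have hu1 : (⟨l+1, hl2⟩ : Fin n) ∈ S := hin (l+1) hl2 (by omega) (by omega)
  have hu0I : (⟨⟨l, hl1⟩, hu0⟩ : ↥S) ∈ I :=
    (hmemI _).2 ⟨by show l ≤ l; omega, by show l < l + len; omega⟩
  have hu1I : (⟨⟨l+1, hl2⟩, hu1⟩ : ↥S) ∈ I :=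
    (hmemI _).2 ⟨by show l ≤ l + 1; omega, by show l + 1 < l + len; omega⟩
  rcases hind I hint with h | h | ⟨c, hc⟩
  · rw [h] at hu0I; exact hu0I
  · obtain ⟨v0, hv0S, hv0⟩ := hw
    have h5 : (⟨v0, hv0S⟩ : ↥S) ∈ I := h ▸ Set.mem_univ _
    rw [hmemI] at h5
    have h6 : l ≤ v0.val ∧ v0.val < l + len := h5
    omega
  · rw [hc] at hu0I hu1I
    rw [Set.mem_singleton_iff] at hu0I hu1I
    have : ((⟨⟨l, hl1⟩, hu0⟩ : ↥S) : Fin n).val = ((⟨⟨l+1, hl2⟩, hu1⟩ : ↥S) : Fin n).val := by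
      rw [hu0I, hu1I]
    simp at this

lemma decomp_aux (n : ℕ) (hn : 6 ≤ n) (S : Set (Fin n)) (a b : ℕ) (hab : a < b) (hb : b < n)
    (hmem : ∀ v : Fin n, v ∈ S ↔ (v.val ≠ a ∧ v.val ≠ b))
    (e1 : ¬(a = 0 ∧ b = 1)) (e2 : ¬(a = 0 ∧ b = n - 1)) (e3 : ¬(a = n - 2 ∧ b = n - 1)) :
    ¬ Indecomposable ((P n).induce S) := by
  by_cases ha0 : a = 0
  · by_cases hb3 : 3 ≤ b
    · -- I = [1, b), witness b+1  (b ≤ n-2 from e2)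
      refine run_decomp n S 1 (b-1) (by omega) (by omega)
        (fun k h h1 h2 => (hmem _).2 ⟨by show k ≠ a; omega, by show k ≠ b; omega⟩)
        (fun v hv => by have h := (hmem v).1 hv; have h3 := v.isLt; omega)
        (fun v hv => by have h := (hmem v).1 hv; have h3 := v.isLt; omega)
        ⟨⟨b+1, by omega⟩, (hmem _).2 ⟨by show b+1 ≠ a; omega, by show b+1 ≠ b; omega⟩,
          Or.inr (by show 1 + (b-1) ≤ b+1; omega)⟩
    · -- a = 0, b = 2 : I = [3, n), witness 1
      refine run_decomp n S 3 (n-3) (by omega) (by omega)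
        (fun k h h1 h2 => (hmem _).2 ⟨by show k ≠ a; omega, by show k ≠ b; omega⟩)
        (fun v hv => by have h := (hmem v).1 hv; have h3 := v.isLt; omega)
        (fun v hv => by have h := (hmem v).1 hv; have h3 := v.isLt; omega)
        ⟨⟨1, by omega⟩, (hmem _).2 ⟨by show 1 ≠ a; omega, by show 1 ≠ b; omega⟩,
          Or.inl (by show 1 < 3; omega)⟩
  · by_cases ha1 : a = 1
    · by_cases hb4 : 4 ≤ b
      · -- I = [2, b), witness 0
        refine run_decomp n S 2 (b-2) (by omega) (by omega)
          (fun k h h1 h2 => (hmem _).2 ⟨by show k ≠ a; omega, by show k ≠ b; omega⟩)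
          (fun v hv => by have h := (hmem v).1 hv; have h3 := v.isLt; omega)
          (fun v hv => by have h := (hmem v).1 hv; have h3 := v.isLt; omega)
          ⟨⟨0, by omega⟩, (hmem _).2 ⟨by show 0 ≠ a; omega, by show 0 ≠ b; omega⟩,
            Or.inl (by show 0 < 2; omega)⟩
      · -- a = 1, b ≤ 3 : I = [b+1, n), witness 0
        refine run_decomp n S (b+1) (n-b-1) (by omega) (by omega)
          (fun k h h1 h2 => (hmem _).2 ⟨by show k ≠ a; omega, by show k ≠ b; omega⟩)
          (fun v hv => by have h := (hmem v).1 hv; have h3 := v.isLt; omega)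
          (fun v hv => by have h := (hmem v).1 hv; have h3 := v.isLt; omega)
          ⟨⟨0, by omega⟩, (hmem _).2 ⟨by show 0 ≠ a; omega, by show 0 ≠ b; omega⟩,
            Or.inl (by show 0 < b+1; omega)⟩
    · -- a ≥ 2 : I = [0, a)
      by_cases hba : b = a + 1
      · -- witness a+2 (a ≤ n-3 from e3)
        refine run_decomp n S 0 a (by omega) (by omega)
          (fun k h h1 h2 => (hmem _).2 ⟨by show k ≠ a; omega, by show k ≠ b; omega⟩)
          (fun v hv => by have h := (hmem v).1 hv; have h3 := v.isLt; omega)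
          (fun v hv => by have h := (hmem v).1 hv; have h3 := v.isLt; omega)
          ⟨⟨a+2, by omega⟩, (hmem _).2 ⟨by show a+2 ≠ a; omega, by show a+2 ≠ b; omega⟩,
            Or.inr (by show 0 + a ≤ a+2; omega)⟩
      · -- witness a+1
        refine run_decomp n S 0 a (by omega) (by omega)
          (fun k h h1 h2 => (hmem _).2 ⟨by show k ≠ a; omega, by show k ≠ b; omega⟩)
          (fun v hv => by have h := (hmem v).1 hv; have h3 := v.isLt; omega)
          (fun v hv => by have h := (hmem v).1 hv; have h3 := v.isLt; omega)
          ⟨⟨a+1, by omega⟩, (hmem _).2 ⟨by show a+1 ≠ a; omega, by show a+1 ≠ b; omega⟩,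
            Or.inr (by show 0 + a ≤ a+1; omega)⟩

theorem indec_graph_path (n : ℕ) (hn : 6 ≤ n) (x y : Fin n) (hxy : x ≠ y) :
    Indecomposable ((P n).induce (({x, y} : Set (Fin n))ᶜ)) ↔
      (({x, y} : Set (Fin n)) = {⟨0, by omega⟩, ⟨1, by omega⟩} ∨
       ({x, y} : Set (Fin n)) = {⟨0, by omega⟩, ⟨n - 1, by omega⟩} ∨
       ({x, y} : Set (Fin n)) = {⟨n - 2, by omega⟩, ⟨n - 1, by omega⟩}) := by
  have hxv : x.val ≠ y.val := fun h => hxy (Fin.ext h)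
  have pair_iff : ∀ (i j : ℕ) (hi : i < n) (hj : j < n),
      (({x, y} : Set (Fin n)) = {⟨i, hi⟩, ⟨j, hj⟩}) ↔
        ((x.val = i ∧ y.val = j) ∨ (x.val = j ∧ y.val = i)) := by
    intro i j hi hj
    rw [Set.pair_eq_pair_iff]
    simp [Fin.ext_iff]
  constructor
  · intro hind
    by_contra hcon
    push_neg at hcon
    obtain ⟨c1, c2, c3⟩ := hcon
    rw [ne_eq, pair_iff] at c1 c2 c3
    set a := min x.val y.val with hadef
    set b := max x.val y.val with hbdef
    have hmem : ∀ v : Fin n, v ∈ (({x, y} : Set (Fin n))ᶜ) ↔ (v.val ≠ a ∧ v.val ≠ b) := by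
      intro v
      simp only [Set.mem_compl_iff, Set.mem_insert_iff, Set.mem_singleton_iff, Fin.ext_iff]
      omega
    have hyl := y.isLt
    have hxl := x.isLt
    exact decomp_aux n hn _ a b (by omega) (by omega) hmem
      (by omega) (by omega) (by omega) hind
  · have hyl := y.isLt
    have hxl := x.isLt
    rintro (h | h | h)
    · refine run_indec n 2 (n-2) (by omega) (by omega) _ (fun v => ?_)
      rw [Set.mem_compl_iff, h]
      simp only [Set.mem_insert_iff, Set.mem_singleton_iff, Fin.ext_iff]
      have := v.isLt
      omega
    · refine run_indec n 1 (n-2) (by omega) (by omega) _ (fun v => ?_)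
      rw [Set.mem_compl_iff, h]
      simp only [Set.mem_insert_iff, Set.mem_singleton_iff, Fin.ext_iff]
      have := v.isLt
      omega
    · refine run_indec n 0 (n-2) (by omega) (by omega) _ (fun v => ?_)
      rw [Set.mem_compl_iff, h]
      simp only [Set.mem_insert_iff, Set.mem_singleton_iff, Fin.ext_iff]
      have := v.isLt
      omega
end
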